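/- arXiv:1806.02107 — 4 statements merged into one kernel-verified Lean document; each statement's English description precedes it below -/
import Mathlib

section
/- Let E ⊂ ℝ^d be a bounded convex set with nonempty interior and Φ a positive measure with supp(Φ) = E. Let 0 < γ ≤ η. Then there exists c > 0 such that for all x, y ∈ E, Φ(B(x, η) ∩ B(y, γ)) ≥ c · 1_{y ∈ B(x, η + γ/4)}. -/
open MeasureTheory
open scoped ENNReal

lemma aux_mid (d : ℕ) (Eset : Set (EuclideanSpace ℝ (Fin d))) (hconv : Convex ℝ Eset)
    (γ η : ℝ) (hγ : 0 < γ) (hγη : γ ≤ η) {x y : EuclideanSpace ℝ (Fin d)}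
    (hx : x ∈ Eset) (hy : y ∈ Eset) (hxy : dist x y < η + γ / 4) :
    ∃ m ∈ Eset, dist m x ≤ η - γ / 4 ∧ dist m y ≤ 3 * γ / 4 := by
  set D := dist x y with hD
  by_cases hcase : D ≤ 3 * γ / 4
  · refine ⟨x, hx, ?_, ?_⟩
    · simp; linarith
    · exact hcase
  · push_neg at hcase
    have hDpos : 0 < D := by linarith
    set t : ℝ := 1 - 3 * γ / (4 * D) with ht
    have ht0 : 0 < t := by
      rw [ht]
      have : 3 * γ / (4 * D) < 1 := by
        rw [div_lt_one (by linarith)]; linarith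
      linarith
    have ht1 : t < 1 := by
      rw [ht]
      have : 0 < 3 * γ / (4 * D) := by positivity
      linarith
    refine ⟨(1 - t) • x + t • y, hconv hx hy (by linarith) (by linarith) (by ring), ?_, ?_⟩
    · have : (1 - t) • x + t • y - x = t • (y - x) := by
        module
      rw [dist_eq_norm, this, norm_smul, Real.norm_eq_abs, abs_of_pos ht0,
        ← dist_eq_norm, dist_comm, ← hD]
      have : t * D = D - 3 * γ / 4 := by
        field_simp [ht]; rw [ht]; field_simp
      rw [this]; linarith
    · have : (1 - t) • x + t • y - y = (1 - t) • (x - y) := by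
        module
      rw [dist_eq_norm, this, norm_smul, Real.norm_eq_abs, abs_of_pos (by linarith),
        ← dist_eq_norm, ← hD]
      have : (1 - t) * D = 3 * γ / 4 := by
        field_simp [ht]; rw [ht]; field_simp; ring
      rw [this]


/-- Let `E ⊂ ℝ^d` be a bounded convex set with nonempty interior
which is the support of a positive measure `Φ`. For `0 < γ ≤ η` there exists
`c > 0` such that for all `x, y ∈ E`,
`Φ(B(x,η) ∩ B(y,γ)) ≥ c · 1_{y ∈ B(x, η + γ/4)}`. -/
theorem stmt10 (d : ℕ) (Φ : Measure (EuclideanSpace ℝ (Fin d)))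
    (Eset : Set (EuclideanSpace ℝ (Fin d)))
    -- `Eset` is the support of `Φ`
    (hclosed : IsClosed Eset) (hfull : Φ Esetᶜ = 0)
    (hsupp : ∀ x ∈ Eset, ∀ r : ℝ, 0 < r → 0 < Φ (Metric.ball x r))
    -- bounded and convex with nonempty interior
    (hbdd : Bornology.IsBounded Eset) (hconv : Convex ℝ Eset)
    (hint : (interior Eset).Nonempty)
    (γ η : ℝ) (hγ : 0 < γ) (hγη : γ ≤ η) :
    ∃ c : ℝ, 0 < c ∧ ∀ x ∈ Eset, ∀ y ∈ Eset,
      Set.indicator (Metric.ball x (η + γ / 4)) (fun _ => ENNReal.ofReal c) y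
        ≤ Φ (Metric.ball x η ∩ Metric.ball y γ) := by
  have hK : IsCompact Eset := Metric.isCompact_of_isClosed_isBounded hclosed hbdd
  have hγ8 : (0:ℝ) < γ / 8 := by linarith
  obtain ⟨t, htmem, htcov⟩ := hK.elim_nhds_subcover (fun m => Metric.ball m (γ / 8))
    (fun m _ => Metric.ball_mem_nhds m hγ8)
  -- t nonempty
  obtain ⟨x0, hx0⟩ := hint
  have hx0E : x0 ∈ Eset := interior_subset hx0
  obtain ⟨i0, hi0, _⟩ := Set.mem_iUnion₂.mp (htcov hx0E)
  have htne : t.Nonempty := ⟨i0, hi0⟩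
  set v : ℝ≥0∞ := t.inf' htne (fun m => min 1 (Φ (Metric.ball m (γ / 8)))) with hv
  have hvpos : 0 < v := by
    rw [hv, Finset.lt_inf'_iff]
    intro i hi
    exact lt_min one_pos (hsupp i (htmem i hi) _ hγ8)
  have hvle1 : v ≤ 1 := by
    rw [hv]
    exact (Finset.inf'_le _ hi0).trans (min_le_left _ _)
  have hvne : v ≠ ⊤ := (hvle1.trans_lt (by norm_num)).ne
  have key : ∀ m ∈ Eset, v ≤ Φ (Metric.ball m (γ / 4)) := by
    intro m hm
    obtain ⟨i, hi, him⟩ := Set.mem_iUnion₂.mp (htcov hm)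
    have hsub : Metric.ball i (γ / 8) ⊆ Metric.ball m (γ / 4) := by
      intro z hz
      rw [Metric.mem_ball] at *
      have := dist_triangle z i m
      have him' : dist i m < γ / 8 := by rw [dist_comm]; exact him
      calc dist z m ≤ dist z i + dist i m := dist_triangle z i m
        _ < γ / 8 + γ / 8 := by linarith
        _ = γ / 4 := by ring
    calc v ≤ min 1 (Φ (Metric.ball i (γ / 8))) := Finset.inf'_le _ hi
      _ ≤ Φ (Metric.ball i (γ / 8)) := min_le_right _ _
      _ ≤ Φ (Metric.ball m (γ / 4)) := measure_mono hsub
  refine ⟨v.toReal, ENNReal.toReal_pos hvpos.ne' hvne, ?_⟩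
  intro x hx y hy
  by_cases hyx : y ∈ Metric.ball x (η + γ / 4)
  · rw [Set.indicator_of_mem hyx, ENNReal.ofReal_toReal hvne]
    rw [Metric.mem_ball, dist_comm] at hyx
    obtain ⟨m, hmE, hmx, hmy⟩ := aux_mid d Eset hconv γ η hγ hγη hx hy hyx
    have hsub : Metric.ball m (γ / 4) ⊆ Metric.ball x η ∩ Metric.ball y γ := by
      intro z hz
      rw [Metric.mem_ball] at hz
      constructor
      · rw [Metric.mem_ball]
        calc dist z x ≤ dist z m + dist m x := dist_triangle z m x
          _ < γ / 4 + (η - γ / 4) := by linarith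
          _ = η := by ring
      · rw [Metric.mem_ball]
        calc dist z y ≤ dist z m + dist m y := dist_triangle z m y
          _ < γ / 4 + 3 * γ / 4 := by linarith
          _ = γ := by ring
    exact (key m hmE).trans (measure_mono hsub)
  · rw [Set.indicator_of_notMem hyx]
    exact zero_le
end

section
/- Let x, y ∈ ℝ^d with ‖x − y‖ < η + γ/4 where 0 < γ ≤ η. Then there exists a point m lying strictly on the line segment between x and y such that the ball B(m, γ/4) is contained in B(x, η) ∩ B(y, γ). -/
open scoped ENNReal

/-- If `‖x − y‖ < η + γ/4` with `0 < γ ≤ η`, there is a point `m`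
strictly on the segment between `x` and `y` with
`B(m, γ/4) ⊆ B(x, η) ∩ B(y, γ)`. -/
theorem stmt11 (d : ℕ) (x y : EuclideanSpace ℝ (Fin d))
    (γ η : ℝ) (hγ : 0 < γ) (hγη : γ ≤ η)
    (hxy : dist x y < η + γ / 4) :
    ∃ t : ℝ, t ∈ Set.Ioo (0 : ℝ) 1 ∧
      Metric.ball ((1 - t) • x + t • y) (γ / 4)
        ⊆ Metric.ball x η ∩ Metric.ball y γ := by
  set D := dist x y with hD
  have hD0 : 0 ≤ D := dist_nonneg
  have key : ∀ t : ℝ, t ∈ Set.Ioo (0 : ℝ) 1 → t * D + γ / 4 ≤ η →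
      (1 - t) * D + γ / 4 ≤ γ →
      Metric.ball ((1 - t) • x + t • y) (γ / 4)
        ⊆ Metric.ball x η ∩ Metric.ball y γ := by
    intro t ht h1 h2 z hz
    have hzm : dist z ((1 - t) • x + t • y) < γ / 4 := hz
    have hmx : dist ((1 - t) • x + t • y) x = t * D := by
      rw [dist_eq_norm]
      have : ((1 - t) • x + t • y) - x = t • (y - x) := by module
      rw [this, norm_smul, Real.norm_eq_abs, abs_of_pos ht.1, ← dist_eq_norm,
        dist_comm]
    have hmy : dist ((1 - t) • x + t • y) y = (1 - t) * D := by
      rw [dist_eq_norm]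
      have : ((1 - t) • x + t • y) - y = (1 - t) • (x - y) := by module
      rw [this, norm_smul, Real.norm_eq_abs, abs_of_pos (by linarith [ht.2]),
        ← dist_eq_norm]
    constructor
    · have := dist_triangle z ((1 - t) • x + t • y) x
      simp only [Metric.mem_ball]
      linarith [this]
    · have := dist_triangle z ((1 - t) • x + t • y) y
      simp only [Metric.mem_ball]
      linarith [this]
  by_cases hc : D ≤ 3 * γ / 4
  · refine ⟨1/2, ⟨by norm_num, by norm_num⟩, key _ ⟨by norm_num, by norm_num⟩
      (by nlinarith) (by nlinarith)⟩
  · push_neg at hc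
    have hDpos : 0 < D := by linarith
    refine ⟨1 - 3 * γ / (4 * D), ⟨?_, ?_⟩, key _ ⟨?_, ?_⟩ ?_ ?_⟩
    · have : 3 * γ / (4 * D) < 1 := by
        rw [div_lt_one (by linarith)]; linarith
      linarith
    · have : 0 < 3 * γ / (4 * D) := by positivity
      linarith
    · have : 3 * γ / (4 * D) < 1 := by
        rw [div_lt_one (by linarith)]; linarith
      linarith
    · have : 0 < 3 * γ / (4 * D) := by positivity
      linarith
    · have : (1 - 3 * γ / (4 * D)) * D = D - 3 * γ / 4 := by
        field_simp
      rw [this]; linarith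
    · have : (1 - (1 - 3 * γ / (4 * D))) * D = 3 * γ / 4 := by
        field_simp; ring
      rw [this]; linarith
end

section
/- Let P be a transition kernel on ℝ^d and Φ a positive measure whose support E is bounded, convex, and has nonempty interior. Suppose there exists ε > 0 such that for all x ∈ E, P(x, dy) ≥ 1_{B(x,ε)}(y) Φ(dy). Then there exist C > 0 and n ≥ 1 such that for every x ∈ E and every measurable A ⊆ E, P^n(x, A) ≥ C Φ(A). -/
open MeasureTheory ProbabilityTheory
open scoped ENNReal

/-- The `n`-step iterate `P^n` of a transition kernel. -/
noncomputable def iterK {α : Type*} [MeasurableSpace α]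
    (P : Kernel α α) : ℕ → Kernel α α
  | 0 => Kernel.id
  | n + 1 => (iterK P n).comp P

/-- uniform Doeblin condition. If `P(x,·) ≥ 1_{B(x,ε)} Φ` for all
`x` in the support `E` of `Φ`, with `E` bounded convex with nonempty interior,
then there exist `C > 0` and `n ≥ 1` with `P^n(x, A) ≥ C Φ(A)` for all `x ∈ E`
and measurable `A ⊆ E`. -/
theorem stmt12 (d : ℕ) (P : Kernel (EuclideanSpace ℝ (Fin d)) (EuclideanSpace ℝ (Fin d)))
    [IsMarkovKernel P]
    (Φ : Measure (EuclideanSpace ℝ (Fin d)))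
    (Eset : Set (EuclideanSpace ℝ (Fin d)))
    -- `Eset` is the support of `Φ`
    (hclosed : IsClosed Eset) (hfull : Φ Esetᶜ = 0)
    (hsupp : ∀ x ∈ Eset, ∀ r : ℝ, 0 < r → 0 < Φ (Metric.ball x r))
    -- bounded and convex with nonempty interior
    (hbdd : Bornology.IsBounded Eset) (hconv : Convex ℝ Eset)
    (hint : (interior Eset).Nonempty)
    -- minorization: `P(x, dy) ≥ 1_{B(x,ε)}(y) Φ(dy)` on `Eset`
    (ε : ℝ) (hε : 0 < ε)
    (hminor : ∀ x ∈ Eset, ∀ A : Set (EuclideanSpace ℝ (Fin d)), MeasurableSet A →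
      Φ (A ∩ Metric.ball x ε) ≤ P x A) :
    ∃ C : ℝ, 0 < C ∧ ∃ n : ℕ, 1 ≤ n ∧
      ∀ x ∈ Eset, ∀ A : Set (EuclideanSpace ℝ (Fin d)), MeasurableSet A →
        A ⊆ Eset → ENNReal.ofReal C * Φ A ≤ iterK P n x A := by
  classical
  obtain ⟨x₀, hx₀i⟩ := hint
  have hx₀ : x₀ ∈ Eset := interior_subset hx₀i
  have hEc : IsCompact Eset := Metric.isCompact_of_isClosed_isBounded hclosed hbdd
  -- `Φ S ≤ Φ (S ∩ Eset)` since `Φ Esetᶜ = 0`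
  have hΦE : ∀ S : Set (EuclideanSpace ℝ (Fin d)), Φ S ≤ Φ (S ∩ Eset) := by
    intro S
    calc Φ S ≤ Φ (S ∩ Eset) + Φ (S \ Eset) := measure_le_inter_add_diff Φ S Eset
      _ ≤ Φ (S ∩ Eset) + Φ Esetᶜ :=
          add_le_add le_rfl (measure_mono fun y hy => hy.2)
      _ = Φ (S ∩ Eset) := by rw [hfull, add_zero]
  -- finite cover of `Eset` by balls of radius `ε/8`
  obtain ⟨t, htE, htcover⟩ := hEc.elim_nhds_subcover (fun z => Metric.ball z (ε / 8))
    (fun z _ => Metric.ball_mem_nhds z (by positivity))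
  have htne : t.Nonempty := by
    rcases Set.mem_iUnion₂.mp (htcover hx₀) with ⟨z, hz, _⟩
    exact ⟨z, hz⟩
  set c : ℝ≥0∞ := t.inf' htne (fun z => Φ (Metric.ball z (ε / 8))) with hc
  have hcpos : 0 < c := by
    rw [hc, Finset.lt_inf'_iff]
    intro z hz
    exact hsupp z (htE z hz) _ (by positivity)
  have hcone : c ≤ 1 := by
    obtain ⟨z, hz⟩ := htne
    refine le_trans (Finset.inf'_le _ hz) ?_
    have hsub : Metric.ball z (ε / 8) ⊆ Metric.ball z ε :=
      Metric.ball_subset_ball (by linarith)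
    calc Φ (Metric.ball z (ε / 8))
        = Φ (Metric.ball z (ε / 8) ∩ Metric.ball z ε) := by
          rw [Set.inter_eq_left.mpr hsub]
      _ ≤ P z (Metric.ball z (ε / 8)) := hminor z (htE z hz) _ measurableSet_ball
      _ ≤ 1 := prob_le_one
  -- uniform lower bound on small balls around points of `Eset`
  have hcball : ∀ w ∈ Eset, c ≤ Φ (Metric.ball w (ε / 4)) := by
    intro w hw
    rcases Set.mem_iUnion₂.mp (htcover hw) with ⟨z, hz, hwz⟩
    refine le_trans (Finset.inf'_le _ hz) (measure_mono ?_)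
    intro y hy
    simp only [Metric.mem_ball] at *
    have h1 : dist y w ≤ dist y z + dist z w := dist_triangle y z w
    have h2 : dist z w = dist w z := dist_comm z w
    linarith
  -- main chaining induction
  have key : ∀ k : ℕ, ∀ x ∈ Eset, ∀ z ∈ Eset, dist x z ≤ (k + 1 : ℝ) * (ε / 4) →
      ∀ A : Set (EuclideanSpace ℝ (Fin d)), MeasurableSet A →
      c ^ k * Φ (A ∩ Metric.ball z (ε / 2)) ≤ iterK P (k + 1) x A := by
    intro k
    induction k with
    | zero =>
      intro x hx z _ hdist A hA
      have h1 : iterK P 1 x A = P x A := by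
        show (Kernel.id ∘ₖ P) x A = P x A
        rw [Kernel.id_comp]
      push_cast at hdist
      have hsub : A ∩ Metric.ball z (ε / 2) ⊆ A ∩ Metric.ball x ε := by
        rintro y ⟨hyA, hyz⟩
        refine ⟨hyA, ?_⟩
        rw [Metric.mem_ball] at hyz ⊢
        linarith [dist_triangle y z x, dist_comm x z, hdist, hyz]
      calc c ^ 0 * Φ (A ∩ Metric.ball z (ε / 2))
          = Φ (A ∩ Metric.ball z (ε / 2)) := by rw [pow_zero, one_mul]
        _ ≤ Φ (A ∩ Metric.ball x ε) := measure_mono hsub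
        _ ≤ P x A := hminor x hx A hA
        _ = iterK P 1 x A := h1.symm
    | succ k ih =>
      intro x hx z hz hdist A hA
      -- choose intermediate point `w`
      obtain ⟨w, hwE, hw1, hw2⟩ : ∃ w ∈ Eset, dist x w ≤ ε / 2 ∧
          ∀ y, dist w y < ε / 4 → dist y z ≤ (k + 1 : ℝ) * (ε / 4) := by
        by_cases hxz : dist x z ≤ ε / 2
        · refine ⟨z, hz, hxz, fun y hy => ?_⟩
          have h1 : dist y z = dist z y := dist_comm y z
          have hk0 : (0 : ℝ) ≤ (k : ℝ) := Nat.cast_nonneg k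
          nlinarith [hy]
        · push_neg at hxz
          have hd0 : 0 < dist x z := by linarith
          set θ : ℝ := (ε / 2) / dist x z with hθ
          have hθ0 : 0 < θ := by positivity
          have hθ1 : θ < 1 := by
            rw [hθ, div_lt_one hd0]; exact hxz
          set w : EuclideanSpace ℝ (Fin d) := (1 - θ) • x + θ • z with hw
          have hwE : w ∈ Eset := hconv hx hz (by linarith) (le_of_lt hθ0) (by ring)
          have hxw : x - w = θ • (x - z) := by
            rw [hw]; module
          have hwz : w - z = (1 - θ) • (x - z) := by
            rw [hw]; module
          have hdxw : dist x w = ε / 2 := by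
            rw [dist_eq_norm, hxw, norm_smul, Real.norm_eq_abs, abs_of_pos hθ0,
              ← dist_eq_norm, hθ]
            field_simp
          have hdwz : dist w z = dist x z - ε / 2 := by
            rw [dist_eq_norm, hwz, norm_smul, Real.norm_eq_abs, abs_of_pos (by linarith),
              ← dist_eq_norm, hθ]
            field_simp
          refine ⟨w, hwE, le_of_eq hdxw, fun y hy => ?_⟩
          have h1 : dist y z ≤ dist y w + dist w z := dist_triangle y w z
          have h2 : dist y w < ε / 4 := by rwa [dist_comm] at hy
          have h3 : dist x z ≤ ((k : ℝ) + 1 + 1) * (ε / 4) := by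
            convert hdist using 2
            push_cast; ring
          rw [hdwz] at h1
          nlinarith
      -- kernel computation
      have hiter : iterK P (k + 2) x A = ∫⁻ y, iterK P (k + 1) y A ∂(P x) := by
        show ((iterK P (k + 1)) ∘ₖ P) x A = _
        rw [Kernel.comp_apply' _ _ _ hA]
      set S := Eset ∩ Metric.ball w (ε / 4) with hS
      have hSmeas : MeasurableSet S := hclosed.measurableSet.inter measurableSet_ball
      have hSsub : S ⊆ Metric.ball x ε := by
        rintro y ⟨-, hy⟩
        rw [Metric.mem_ball] at hy ⊢
        linarith [dist_triangle y w x, dist_comm w x, hy, hw1]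
      have hPxS : c ≤ P x S := by
        calc c ≤ Φ (Metric.ball w (ε / 4)) := hcball w hwE
          _ ≤ Φ (Metric.ball w (ε / 4) ∩ Eset) := hΦE _
          _ = Φ (S ∩ Metric.ball x ε) := by
              rw [Set.inter_eq_left.mpr hSsub, hS, Set.inter_comm]
          _ ≤ P x S := hminor x hx S hSmeas
      have hlow : ∀ y ∈ S, c ^ k * Φ (A ∩ Metric.ball z (ε / 2)) ≤ iterK P (k + 1) y A := by
        rintro y ⟨hyE, hyw⟩
        exact ih y hyE z hz (hw2 y (by rwa [Metric.mem_ball, dist_comm] at hyw)) A hA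
      calc c ^ (k + 1) * Φ (A ∩ Metric.ball z (ε / 2))
          = (c ^ k * Φ (A ∩ Metric.ball z (ε / 2))) * c := by ring
        _ ≤ (c ^ k * Φ (A ∩ Metric.ball z (ε / 2))) * P x S := by gcongr
        _ = ∫⁻ _ in S, c ^ k * Φ (A ∩ Metric.ball z (ε / 2)) ∂(P x) := by
            rw [setLIntegral_const]
        _ ≤ ∫⁻ y in S, iterK P (k + 1) y A ∂(P x) :=
            setLIntegral_mono (Kernel.measurable_coe _ hA) hlow
        _ ≤ ∫⁻ y, iterK P (k + 1) y A ∂(P x) := setLIntegral_le_lintegral _ _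
        _ = iterK P (k + 2) x A := hiter.symm
  -- choose the number of steps
  obtain ⟨R, hR⟩ := Metric.isBounded_iff.mp hbdd
  obtain ⟨k, hk⟩ := exists_nat_ge (R / (ε / 4))
  have hkR : R ≤ (k + 1 : ℝ) * (ε / 4) := by
    have h1 : R / (ε / 4) * (ε / 4) ≤ (k : ℝ) * (ε / 4) := by
      have h4 : (0:ℝ) < ε / 4 := by positivity
      nlinarith
    have h2 : R / (ε / 4) * (ε / 4) = R := by field_simp
    nlinarith [hε]
  -- the constant
  have hcardpos : (0 : ℝ≥0∞) < t.card := by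
    exact_mod_cast Finset.card_pos.mpr htne
  have hcardne : (t.card : ℝ≥0∞) ≠ 0 := ne_of_gt hcardpos
  have hcardnt : (t.card : ℝ≥0∞) ≠ ⊤ := ENNReal.natCast_ne_top _
  have hckpos : 0 < c ^ k := ENNReal.pow_pos hcpos k
  have hcknt : c ^ k ≠ ⊤ := by
    refine ne_top_of_le_ne_top ENNReal.one_ne_top ?_
    exact pow_le_one' hcone k
  set Ce : ℝ≥0∞ := c ^ k / t.card with hCe
  have hCent : Ce ≠ ⊤ := by
    rw [hCe]
    exact (ENNReal.div_lt_top hcknt hcardne).ne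
  have hCepos : 0 < Ce := by
    rw [hCe]
    exact ENNReal.div_pos (ne_of_gt hckpos) hcardnt
  refine ⟨Ce.toReal, ENNReal.toReal_pos (ne_of_gt hCepos) hCent, k + 1, Nat.le_add_left 1 k, ?_⟩
  intro x hx A hA hAE
  rw [ENNReal.ofReal_toReal hCent]
  -- cover `A` by the finitely many balls
  have hAcov : Φ A ≤ ∑ z ∈ t, Φ (A ∩ Metric.ball z (ε / 2)) := by
    have hsub : A ⊆ ⋃ z ∈ t, A ∩ Metric.ball z (ε / 2) := by
      intro y hy
      rcases Set.mem_iUnion₂.mp (htcover (hAE hy)) with ⟨z, hzt, hyz⟩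
      refine Set.mem_iUnion₂.mpr ⟨z, hzt, hy, ?_⟩
      exact Metric.ball_subset_ball (by linarith) hyz
    calc Φ A ≤ Φ (⋃ z ∈ t, A ∩ Metric.ball z (ε / 2)) := measure_mono hsub
      _ ≤ ∑ z ∈ t, Φ (A ∩ Metric.ball z (ε / 2)) := measure_biUnion_finset_le t _
  have hmain : c ^ k * Φ A ≤ (t.card : ℝ≥0∞) * iterK P (k + 1) x A := by
    calc c ^ k * Φ A ≤ c ^ k * ∑ z ∈ t, Φ (A ∩ Metric.ball z (ε / 2)) := by gcongr
      _ = ∑ z ∈ t, c ^ k * Φ (A ∩ Metric.ball z (ε / 2)) := Finset.mul_sum _ _ _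
      _ ≤ ∑ _z ∈ t, iterK P (k + 1) x A := by
          refine Finset.sum_le_sum fun z hz => ?_
          exact key k x hx z (htE z hz) (le_trans (hR hx (htE z hz)) hkR) A hA
      _ = (t.card : ℝ≥0∞) * iterK P (k + 1) x A := by
          rw [Finset.sum_const, nsmul_eq_mul]
  rw [hCe, div_eq_mul_inv, mul_comm (c ^ k) (t.card : ℝ≥0∞)⁻¹, mul_assoc]
  rw [← ENNReal.div_eq_inv_mul]
  rw [ENNReal.div_le_iff_le_mul (Or.inl hcardne) (Or.inl hcardnt)]
  calc c ^ k * Φ A ≤ (t.card : ℝ≥0∞) * iterK P (k + 1) x A := hmain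
    _ = iterK P (k + 1) x A * t.card := mul_comm _ _
end

section
/- Let F and G be two cumulative distribution functions with sup_t |F(t) − G(t)| ≤ γ for some 0 < γ < 1/4, and suppose G has a density g that is strictly positive on [F⁻(γ), F⁻(1−γ)] with inf_{u∈[γ,1−γ]} g(G⁻(u)) = b > 0. Then for every u ∈ [2γ, 1−2γ], |F⁻(u) − G⁻(u)| ≤ γ / b. -/
open Filter MeasureTheory

/-- Generalized inverse (quantile function) of a CDF: `H⁻(u) = inf{x : H(x) ≥ u}`. -/
noncomputable def genInv (H : ℝ → ℝ) (u : ℝ) : ℝ :=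
  sInf {x : ℝ | u ≤ H x}

section QuantHelpers

open Set

lemma quant_ne' {H : ℝ → ℝ} (htop : Tendsto H atTop (nhds 1))
    {u : ℝ} (hu1 : u < 1) : {x : ℝ | u ≤ H x}.Nonempty := by
  obtain ⟨x, hx⟩ := (htop.eventually (eventually_gt_nhds hu1)).exists
  exact ⟨x, hx.le⟩

lemma quant_bdd' {H : ℝ → ℝ} (hmono : Monotone H)
    (hbot : Tendsto H atBot (nhds 0))
    {u : ℝ} (hu0 : 0 < u) : BddBelow {x : ℝ | u ≤ H x} := by
  obtain ⟨x0, hx0⟩ := (hbot.eventually (eventually_lt_nhds hu0)).exists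
  refine ⟨x0, fun y hy => ?_⟩
  by_contra h
  push_neg at h
  exact absurd (le_trans hy (hmono h.le)) (not_le.mpr hx0)

lemma genInv_le'' {H : ℝ → ℝ} (hmono : Monotone H)
    (hbot : Tendsto H atBot (nhds 0)) {u x : ℝ} (hu0 : 0 < u) (hx : u ≤ H x) :
    genInv H u ≤ x :=
  csInf_le (quant_bdd' hmono hbot hu0) hx

lemma le_genInv'' {H : ℝ → ℝ} {u x : ℝ} (hne : {y : ℝ | u ≤ H y}.Nonempty)
    (h : ∀ y, u ≤ H y → x ≤ y) : x ≤ genInv H u :=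
  le_csInf hne h

lemma lt_genInv'' {H : ℝ → ℝ} (hmono : Monotone H)
    (hbot : Tendsto H atBot (nhds 0)) {u x : ℝ} (hu0 : 0 < u)
    (hx : x < genInv H u) : H x < u := by
  by_contra h
  push_neg at h
  exact absurd (genInv_le'' hmono hbot hu0 h) (not_le.mpr hx)

lemma apply_genInv_ge' {H : ℝ → ℝ} (hmono : Monotone H)
    (htop : Tendsto H atTop (nhds 1)) (hbot : Tendsto H atBot (nhds 0))
    (hrc : ∀ x, ContinuousWithinAt H (Set.Ici x) x)
    {u : ℝ} (hu0 : 0 < u) (hu1 : u < 1) : u ≤ H (genInv H u) := by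
  set A := genInv H u with hA
  have h1 : ∀ x ∈ Ioi A, u ≤ H x := by
    intro x hx
    obtain ⟨y, hy, hyx⟩ := (csInf_lt_iff (quant_bdd' hmono hbot hu0)
      (quant_ne' htop hu1)).mp hx
    exact le_trans hy (hmono hyx.le)
  have ht : Tendsto H (nhdsWithin A (Set.Ioi A)) (nhds (H A)) :=
    (hrc A).mono_left (nhdsWithin_mono A Set.Ioi_subset_Ici_self)
  exact ge_of_tendsto ht (eventually_nhdsWithin_of_forall h1)

lemma apply_genInv_eq' {H : ℝ → ℝ} (hmono : Monotone H)
    (htop : Tendsto H atTop (nhds 1)) (hbot : Tendsto H atBot (nhds 0))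
    (hcont : Continuous H)
    {u : ℝ} (hu0 : 0 < u) (hu1 : u < 1) : H (genInv H u) = u := by
  set A := genInv H u with hA
  have hmem : A ∈ {x : ℝ | u ≤ H x} :=
    (isClosed_Ici.preimage hcont).csInf_mem (quant_ne' htop hu1)
      (quant_bdd' hmono hbot hu0)
  refine le_antisymm ?_ hmem
  have ht : Tendsto H (nhdsWithin A (Set.Iio A)) (nhds (H A)) :=
    (hcont.tendsto A).mono_left nhdsWithin_le_nhds
  refine le_of_tendsto ht (eventually_nhdsWithin_of_forall fun x hx => ?_)
  exact (lt_genInv'' hmono hbot hu0 hx).le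

end QuantHelpers

/-- If `F, G` are CDFs with `sup_t |F(t) − G(t)| ≤ γ`,
`0 < γ < 1/4`, and `G` has a density `g` strictly positive on
`[F⁻(γ), F⁻(1−γ)]` with `b = inf_{u∈[γ,1−γ]} g(G⁻(u)) > 0`, then for every
`u ∈ [2γ, 1−2γ]`, `|F⁻(u) − G⁻(u)| ≤ γ / b`. -/
theorem stmt15 (F G g : ℝ → ℝ)
    (hFmono : Monotone F) (hGmono : Monotone G)
    (hFrc : ∀ x, ContinuousWithinAt F (Set.Ici x) x)
    (hFtop : Tendsto F atTop (nhds 1)) (hFbot : Tendsto F atBot (nhds 0))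
    (hGtop : Tendsto G atTop (nhds 1)) (hGbot : Tendsto G atBot (nhds 0))
    -- `g` is a density of `G`
    (hgmeas : Measurable g) (hgnn : ∀ x, 0 ≤ g x)
    (hGdens : ∀ x, G x = ∫ t in Set.Iic x, g t)
    (γ : ℝ) (hγ0 : 0 < γ) (hγ : γ < 1 / 4)
    (hclose : ∀ t, |F t - G t| ≤ γ)
    -- strict positivity of the density on `[F⁻(γ), F⁻(1−γ)]`
    (hgpos : ∀ x ∈ Set.Icc (genInv F γ) (genInv F (1 - γ)), 0 < g x)
    (b : ℝ) (hbdef : b = ⨅ u : Set.Icc γ (1 - γ), g (genInv G (u : ℝ)))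
    (hb : 0 < b) :
    ∀ u ∈ Set.Icc (2 * γ) (1 - 2 * γ),
      |genInv F u - genInv G u| ≤ γ / b := by
  intro u hu
  obtain ⟨hu1, hu2⟩ := hu
  have hγ1 : γ < 1 := by linarith
  have hu0 : 0 < u := by linarith
  have hu1' : u < 1 := by linarith
  have hγb : 0 < γ / b := div_pos hγ0 hb
  -- integrability of g on each Iic
  have hint : ∀ x : ℝ, IntegrableOn g (Set.Iic x) := by
    intro x
    by_contra hx
    have h0 : ∀ y, x ≤ y → G y = 0 := by
      intro y hy
      rw [hGdens y]
      apply integral_undef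
      intro hcon
      exact hx (MeasureTheory.IntegrableOn.mono_set hcon (Set.Iic_subset_Iic.mpr hy))
    obtain ⟨y, hy1, hy2⟩ :=
      ((hGtop.eventually (eventually_gt_nhds (by norm_num : (0:ℝ) < 1))).and
        (eventually_ge_atTop x)).exists
    rw [h0 y hy2] at hy1
    exact lt_irrefl 0 hy1
  have hdiff : ∀ p q : ℝ, p ≤ q → G q - G p = ∫ t in Set.Ioc p q, g t := by
    intro p q hpq
    rw [hGdens p, hGdens q, ← Set.Iic_union_Ioc_eq_Iic hpq,
      setIntegral_union (Set.Iic_disjoint_Ioc le_rfl) measurableSet_Ioc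
        (hint p) ((hint q).mono_set Set.Ioc_subset_Iic_self)]
    ring
  have hGcont : Continuous G := by
    have hii : ∀ a c : ℝ, IntervalIntegrable g volume a c := fun a c =>
      ⟨(hint c).mono_set Set.Ioc_subset_Iic_self,
       (hint a).mono_set Set.Ioc_subset_Iic_self⟩
    have hprim : Continuous fun x => ∫ t in (0:ℝ)..x, g t :=
      intervalIntegral.continuous_primitive hii 0
    have hEq : G = fun x => G 0 + ∫ t in (0:ℝ)..x, g t := by
      funext x
      rcases le_total 0 x with h | h
      · rw [intervalIntegral.integral_of_le h, ← hdiff 0 x h]; ring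
      · rw [intervalIntegral.integral_symm x 0, intervalIntegral.integral_of_le h,
          ← hdiff x 0 h]; ring
    rw [hEq]
    exact continuous_const.add hprim
  -- b is a lower bound on g at quantile points
  have hb_le : ∀ w : ℝ, γ ≤ w → w ≤ 1 - γ → b ≤ g (genInv G w) := by
    intro w hw1 hw2
    rw [hbdef]
    have hbdd : BddBelow (Set.range fun v : Set.Icc γ (1 - γ) => g (genInv G (v : ℝ))) :=
      ⟨0, fun y hy => by obtain ⟨v, rfl⟩ := hy; exact hgnn _⟩
    exact ciInf_le hbdd ⟨w, hw1, hw2⟩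
  -- integral lower bound
  have hibound : ∀ p q : ℝ, p ≤ q → (∀ z ∈ Set.Ioc p q, b ≤ g z) →
      b * (q - p) ≤ G q - G p := by
    intro p q hpq hz
    rw [hdiff p q hpq]
    have h := setIntegral_ge_of_const_le measurableSet_Ioc
      (by rw [Real.volume_Ioc]; exact ENNReal.ofReal_ne_top) hz
      ((hint q).mono_set Set.Ioc_subset_Iic_self)
    rwa [Real.volume_real_Ioc_of_le hpq, smul_eq_mul, mul_comm] at h
  -- strict monotonicity where g > 0
  have hstrict : ∀ p q : ℝ, p < q → (∀ z ∈ Set.Ioc p q, 0 < g z) →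
      G p < G q := by
    intro p q hpq hz
    have h : 0 < ∫ t in Set.Ioc p q, g t := by
      rw [setIntegral_pos_iff_support_of_nonneg_ae
        (Filter.Eventually.of_forall fun z => hgnn z)
        ((hint q).mono_set Set.Ioc_subset_Iic_self)]
      refine lt_of_lt_of_le ?_ (measure_mono fun z hzz => ⟨(hz z hzz).ne', hzz⟩)
      rw [Real.volume_Ioc]
      exact ENNReal.ofReal_pos.mpr (by linarith)
    linarith [hdiff p q hpq.le]
  set A := genInv G u with hAdef
  set B := genInv F u with hBdef
  have hGA : G A = u := apply_genInv_eq' hGmono hGtop hGbot hGcont hu0 hu1'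
  have hFB : u ≤ F B := apply_genInv_ge' hFmono hFtop hFbot hFrc hu0 hu1'
  have hFltu : ∀ x, x < B → F x < u := fun x hx => lt_genInv'' hFmono hFbot hu0 hx
  have hGltu : ∀ x, x < A → G x < u := fun x hx => lt_genInv'' hGmono hGbot hu0 hx
  have hFγ_le : ∀ z, γ ≤ F z → genInv F γ ≤ z := fun z hz =>
    genInv_le'' hFmono hFbot hγ0 hz
  have hF1γ : (1 - γ : ℝ) ≤ F (genInv F (1 - γ)) :=
    apply_genInv_ge' hFmono hFtop hFbot hFrc (by linarith) (by linarith)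
  have hz1γ : ∀ z, F z < 1 - γ → z ≤ genInv F (1 - γ) := by
    intro z hz
    by_contra h
    push_neg at h
    exact absurd (le_trans hF1γ (hFmono h.le)) (not_le.mpr hz)
  have hA1γ : A ≤ genInv F (1 - γ) := by
    refine le_genInv'' (quant_ne' hFtop (by linarith)) fun y hy => ?_
    have h1 := abs_le.mp (hclose y)
    exact genInv_le'' hGmono hGbot hu0 (by linarith [h1.2])
  -- upper bound: B - A ≤ γ/b
  have claim_up : B - A ≤ γ / b := by
    rcases le_or_gt B A with h | hAB
    · linarith
    · have hstrictAB : ∀ p q : ℝ, A ≤ p → p < q → q < B → G p < G q := by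
        intro p q hp hpq hqB
        refine hstrict p q hpq fun z hz => hgpos z ⟨?_, ?_⟩
        · have hGz : u ≤ G z := by
            rw [← hGA]; exact hGmono (le_trans hp hz.1.le)
          have h1 := abs_le.mp (hclose z)
          exact hFγ_le z (by linarith [h1.2])
        · have hFz : F z < u := hFltu z (lt_of_le_of_lt hz.2 hqB)
          exact hz1γ z (by linarith)
      have key : ∀ x ∈ Set.Ioo A B, b ≤ g x := by
        intro x hx
        have hwu : u < G x := by
          rw [← hGA]; exact hstrictAB A x le_rfl hx.1 hx.2
        have hFx : F x < u := hFltu x hx.2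
        have h1 := abs_le.mp (hclose x)
        have hGx2 : G x < u + γ := by linarith [h1.1]
        have hginv : genInv G (G x) = x := by
          refine le_antisymm
            (genInv_le'' hGmono hGbot (show (0:ℝ) < G x by linarith) le_rfl) ?_
          refine le_genInv'' (quant_ne' hGtop (by linarith)) fun y hy => ?_
          by_contra hyx
          push_neg at hyx
          rcases le_or_gt y A with h | h
          · have hyu : G y ≤ u := by rw [← hGA]; exact hGmono h
            linarith
          · exact absurd hy (not_le.mpr (hstrictAB y x h.le hyx hx.2))
        rw [← hginv]
        exact hb_le (G x) (by linarith) (by linarith)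
      by_contra hcon
      push_neg at hcon
      have hxAB : A + γ / b ∈ Set.Ioo A B := ⟨by linarith, by linarith⟩
      have hgb : ∀ z ∈ Set.Ioc A (A + γ / b), b ≤ g z := fun z hz =>
        key z ⟨hz.1, lt_of_le_of_lt hz.2 hxAB.2⟩
      have hib := hibound A (A + γ / b) (by linarith) hgb
      have hFx : F (A + γ / b) < u := hFltu _ hxAB.2
      have h1 := abs_le.mp (hclose (A + γ / b))
      have hGx2 : G (A + γ / b) < u + γ := by linarith [h1.1]
      rw [hGA] at hib
      have hbb : b * (A + γ / b - A) = γ := by field_simp; ring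
      linarith
  -- lower bound: A - B ≤ γ/b
  have claim_low : A - B ≤ γ / b := by
    rcases le_or_gt A B with h | hBA
    · linarith
    · have hstrictBA : ∀ p q : ℝ, B < p → p < q → q ≤ A → G p < G q := by
        intro p q hp hpq hqA
        refine hstrict p q hpq fun z hz => hgpos z ⟨?_, ?_⟩
        · have hFz : u ≤ F z :=
            le_trans hFB (hFmono (le_of_lt (lt_of_lt_of_le hp hz.1.le)))
          exact hFγ_le z (by linarith)
        · exact le_trans (le_trans hz.2 hqA) hA1γ
      have key : ∀ x ∈ Set.Ioo B A, b ≤ g x ∧ u - γ ≤ G x := by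
        intro x hx
        have hFx : u ≤ F x := le_trans hFB (hFmono hx.1.le)
        have h1 := abs_le.mp (hclose x)
        have hGx1 : u - γ ≤ G x := by linarith [h1.2]
        have hGxu : G x < u := hGltu x hx.2
        refine ⟨?_, hGx1⟩
        have hginv : genInv G (G x) = x := by
          refine le_antisymm
            (genInv_le'' hGmono hGbot (show (0:ℝ) < G x by linarith) le_rfl) ?_
          refine le_genInv'' (quant_ne' hGtop (by linarith)) fun y hy => ?_
          by_contra hyx
          push_neg at hyx
          rcases le_or_gt y B with h | h
          · obtain ⟨p, hp1, hp2⟩ := exists_between (show B < x from hx.1)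
            have hGp : G p < G x := hstrictBA p x hp1 hp2 hx.2.le
            have hyp : G y ≤ G p := hGmono (le_trans h hp1.le)
            linarith
          · exact absurd hy (not_le.mpr (hstrictBA y x h hyx hx.2.le))
        rw [← hginv]
        exact hb_le (G x) (by linarith) (by linarith)
      by_contra hcon
      push_neg at hcon
      obtain ⟨x, hx1, hx2⟩ := exists_between (show B < A - γ / b by linarith)
      have hxIoo : x ∈ Set.Ioo B A := ⟨hx1, by linarith⟩
      have hgb : ∀ z ∈ Set.Ioc x A, b ≤ g z := by
        intro z hz
        rcases lt_or_eq_of_le hz.2 with h | h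
        · exact (key z ⟨lt_trans hx1 hz.1, h⟩).1
        · rw [h, hAdef]
          exact hb_le u (by linarith) (by linarith)
      have hib := hibound x A (by linarith) hgb
      rw [hGA] at hib
      have hGx1 : u - γ ≤ G x := (key x hxIoo).2
      have h3 : b * (γ / b) < b * (A - x) :=
        mul_lt_mul_of_pos_left (by linarith) hb
      have hbb : b * (γ / b) = γ := by field_simp
      linarith
  rw [abs_sub_le_iff]
  exact ⟨claim_up, claim_low⟩
end
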